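/- arXiv:1903.10596 — 2 statements merged into one kernel-verified Lean document; each statement's English description precedes it below -/
import Mathlib

section
/- Let ‖·‖_D be a D-norm on ℝᵈ with partial derivatives up to order d on (−∞,0)ᵈ, and set φ(x) = −‖x‖_D, φ_n(x) = −n·log(1/(1 − ‖x‖_D/n)). Then for every nonempty block B ⊆ {1,…,d} and every x < 0, the mixed partial derivative ∂^{|B|}φ_n(x)/∂x_B converges to ∂^{|B|}φ(x)/∂x_B as n → ∞. Consequently, the density f⁽ⁿ⁾(x) = ∂ᵈ/∂x₁⋯∂x_d (1 − ‖x‖_D/n)^n converges pointwise to the density g(x) = ∂ᵈ/∂x₁⋯∂x_d exp(−‖x‖_D) for each x < 0. -/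
open Filter
open scoped NNReal ENNReal

/-- Mixed partial derivative of `f : ℝᵈ → ℝ` along the list of coordinates `l`. -/
noncomputable def mixedPartial {d : ℕ} : List (Fin d) → ((Fin d → ℝ) → ℝ) → (Fin d → ℝ) → ℝ
  | [], f => f
  | i :: t, f => fun x => fderiv ℝ (mixedPartial t f) x (Pi.single i 1)

/-- The analytic function `u ↦ -log(1-u)/u`, extended by `1` at `0`. -/
noncomputable def Lfun : ℝ → ℝ := fun u => if u = 0 then 1 else -Real.log (1 - u) / u

lemma Lfun_zero : Lfun 0 = 1 := if_pos rfl

lemma Lfun_hasSum {u : ℝ} (hu : |u| < 1) :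
    HasSum (fun n : ℕ => u ^ n / ((n : ℝ) + 1)) (Lfun u) := by
  rcases eq_or_ne u 0 with h | h
  · subst h
    have h0 := hasSum_single (f := fun n : ℕ => (0 : ℝ) ^ n / ((n : ℝ) + 1)) 0
      (by intro b hb; simp [zero_pow hb])
    simpa [Lfun] using h0
  · have h1 := (Real.hasSum_pow_div_log_of_abs_lt_one hu).mul_right u⁻¹
    have h2 : (fun n : ℕ => u ^ (n + 1) / ((n : ℝ) + 1) * u⁻¹)
        = fun n : ℕ => u ^ n / ((n : ℝ) + 1) := by
      funext n
      field_simp [pow_succ]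
      ring
    rw [h2] at h1
    have h3 : -Real.log (1 - u) * u⁻¹ = Lfun u := by
      simp [Lfun, h, div_eq_mul_inv]
    rwa [h3] at h1

/-- The power series of `Lfun` at `0`. -/
noncomputable def Lser : FormalMultilinearSeries ℝ ℝ ℝ :=
  fun n => ((n : ℝ) + 1)⁻¹ • ContinuousMultilinearMap.mkPiAlgebraFin ℝ n ℝ

lemma Lfun_analyticAt : AnalyticAt ℝ Lfun 0 := by
  refine ⟨Lser, 1, ?_, ?_, ?_⟩
  · have hb : ∀ n : ℕ, ‖Lser n‖ * (1 : ℝ≥0) ^ n ≤ 1 := by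
      intro n
      have h1 : ‖Lser n‖ ≤ 1 := by
        refine le_trans (ContinuousMultilinearMap.opNorm_smul_le _ _) ?_
        rw [ContinuousMultilinearMap.norm_mkPiAlgebraFin, mul_one, Real.norm_eq_abs,
          abs_of_pos (by positivity)]
        rw [inv_le_one_iff₀]
        right
        have : (0:ℝ) ≤ (n:ℝ) := Nat.cast_nonneg n
        linarith
      calc ‖Lser n‖ * (1:ℝ≥0) ^ n ≤ 1 * 1 := by
            simp only [NNReal.coe_one, one_pow]
            exact mul_le_mul h1 le_rfl zero_le_one zero_le_one
        _ = 1 := one_mul 1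
    have := Lser.le_radius_of_bound 1 hb
    simpa using this
  · exact one_pos
  · intro y hy
    have hy' : |y| < 1 := by
      rw [EMetric.mem_ball, edist_zero_right] at hy
      simpa [Real.enorm_eq_ofReal_abs, ← ENNReal.ofReal_one,
        ENNReal.ofReal_lt_ofReal_iff_of_nonneg (abs_nonneg y)] using hy
    have h1 : (fun n : ℕ => Lser n fun _ : Fin n => y)
        = fun n : ℕ => y ^ n / ((n : ℝ) + 1) := by
      funext n
      simp [Lser, List.prod_ofFn, div_eq_inv_mul]
    rw [h1, zero_add]
    exact Lfun_hasSum hy'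

lemma Lfun_contDiffAt {u : ℝ} (hu : u < 1) {n : WithTop ℕ∞} : ContDiffAt ℝ n Lfun u := by
  rcases eq_or_ne u 0 with h | h
  · subst h
    exact Lfun_analyticAt.contDiffAt
  · have h1 : ContDiffAt ℝ n (fun v : ℝ => -Real.log (1 - v) / v) u := by
      refine ContDiffAt.div ?_ contDiffAt_id h
      refine ContDiffAt.neg ?_
      exact (Real.contDiffAt_log.2 (by intro hc; linarith [sub_eq_zero.mp hc])).comp u
        (contDiff_const.sub contDiff_id).contDiffAt
    refine h1.congr_of_eventuallyEq ?_
    have hne : ∀ᶠ v in nhds u, v ≠ 0 := by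
      exact eventually_ne_nhds h
    filter_upwards [hne] with v hv
    simp [Lfun, hv]

lemma mixedPartial_congr {d : ℕ} (l : List (Fin d)) {U : Set (Fin d → ℝ)} (hU : IsOpen U)
    {f g : (Fin d → ℝ) → ℝ} (h : ∀ y ∈ U, f y = g y) :
    ∀ x ∈ U, mixedPartial l f x = mixedPartial l g x := by
  induction l with
  | nil => exact h
  | cons i t ih =>
    intro x hx
    show fderiv ℝ (mixedPartial t f) x (Pi.single i 1)
        = fderiv ℝ (mixedPartial t g) x (Pi.single i 1)
    have heq : mixedPartial t f =ᶠ[nhds x] mixedPartial t g := by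
      filter_upwards [hU.mem_nhds hx] with y hy using ih y hy
    rw [heq.fderiv_eq]

lemma key {d m : ℕ} {V : Set (ℝ × (Fin d → ℝ))} (hV : IsOpen V)
    {G : ℝ × (Fin d → ℝ) → ℝ} (hG : ContDiffOn ℝ (m : ℕ∞) G V) :
    ∀ l : List (Fin d), l.length ≤ m → ∀ p ∈ V,
      ContDiffAt ℝ ((m - l.length : ℕ) : ℕ∞)
        (fun q : ℝ × (Fin d → ℝ) => mixedPartial l (fun y => G (q.1, y)) q.2) p := by
  intro l
  induction l with
  | nil =>
    intro _ p hp
    have h1 := hG.contDiffAt (hV.mem_nhds hp)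
    simpa [mixedPartial] using h1
  | cons i t ih =>
    intro hlen p hp
    have htlen : t.length < m := by
      simpa [Nat.succ_le_iff] using hlen
    have hH := ih htlen.le
    have hclm : ContDiff ℝ ((m - t.length : ℕ) : ℕ∞)
        (fun r : (ℝ × (Fin d → ℝ)) × (Fin d → ℝ) => ((r.1.1, r.2) : ℝ × (Fin d → ℝ))) :=
      ContDiff.prodMk (contDiff_fst.comp contDiff_fst) contDiff_snd
    have hcomp : ContDiffAt ℝ ((m - t.length : ℕ) : ℕ∞)
        (fun r : (ℝ × (Fin d → ℝ)) × (Fin d → ℝ) =>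
          mixedPartial t (fun y => G (r.1.1, y)) r.2) (p, p.2) := by
      have := ContDiffAt.comp (f := fun r : (ℝ × (Fin d → ℝ)) × (Fin d → ℝ) =>
          ((r.1.1, r.2) : ℝ × (Fin d → ℝ)))
        (g := fun q : ℝ × (Fin d → ℝ) => mixedPartial t (fun y => G (q.1, y)) q.2)
        ((p, p.2)) (hH (p.1, p.2) hp) hclm.contDiffAt
      exact this
    have harith : (((m - (t.length + 1) : ℕ) : ℕ∞) : WithTop ℕ∞) + 1
        ≤ (((m - t.length : ℕ) : ℕ∞) : WithTop ℕ∞) := by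
      have : (m - (t.length + 1)) + 1 = m - t.length := by omega
      exact_mod_cast this.le
    have hfd := ContDiffAt.fderiv
      (f := fun q : ℝ × (Fin d → ℝ) => mixedPartial t (fun y => G (q.1, y)))
      (g := fun q : ℝ × (Fin d → ℝ) => q.2) hcomp contDiffAt_snd harith
    have happ := hfd.clm_apply (contDiffAt_const (c := (Pi.single i 1 : Fin d → ℝ)))
    show ContDiffAt ℝ ((m - (t.length + 1) : ℕ) : ℕ∞)
      (fun q : ℝ × (Fin d → ℝ) =>
        fderiv ℝ (mixedPartial t (fun y => G (q.1, y))) q.2 (Pi.single i 1)) p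
    exact happ

/-- for a D-norm `‖·‖_D` with partial derivatives up to order `d` on the
negative orthant, with `φ = −‖·‖_D` and `φ_n = −n log(1/(1 − ‖·‖_D/n))`, every mixed
partial `∂^{|B|}φ_n/∂x_B` converges to `∂^{|B|}φ/∂x_B` at every `x < 0`; consequently
the densities `f⁽ⁿ⁾ = ∂ᵈ/∂x₁⋯∂x_d (1 − ‖x‖_D/n)^n` converge pointwise to
`g = ∂ᵈ/∂x₁⋯∂x_d exp(−‖x‖_D)` on `(-∞,0)ᵈ`. -/
theorem stmt_12 {d : ℕ} (hd : d ≠ 0) (N : (Fin d → ℝ) → ℝ)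
    (hN0 : ∀ x, 0 ≤ N x)
    (hNhom : ∀ (c : ℝ) (x : Fin d → ℝ), N (c • x) = |c| * N x)
    (hNtri : ∀ x y : Fin d → ℝ, N (x + y) ≤ N x + N y)
    (hNsmooth : ContDiffOn ℝ (d : ℕ∞) N {x : Fin d → ℝ | ∀ j, x j < 0}) :
    (∀ B : Finset (Fin d), B.Nonempty → ∀ x : Fin d → ℝ, (∀ j, x j < 0) →
      Tendsto
        (fun n : ℕ => mixedPartial (B.sort (· ≤ ·))
          (fun y => -(n : ℝ) * Real.log (1 / (1 - N y / n))) x)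
        atTop
        (nhds (mixedPartial (B.sort (· ≤ ·)) (fun y => -N y) x))) ∧
    (∀ x : Fin d → ℝ, (∀ j, x j < 0) →
      Tendsto
        (fun n : ℕ => mixedPartial (List.finRange d) (fun y => (1 - N y / n) ^ n) x)
        atTop
        (nhds (mixedPartial (List.finRange d) (fun y => Real.exp (-N y)) x))) := by
  set Ω : Set (Fin d → ℝ) := {x : Fin d → ℝ | ∀ j, x j < 0} with hΩdef
  have hΩ : IsOpen Ω := by
    have h1 : Ω = ⋂ j, {x : Fin d → ℝ | x j < 0} := by
      ext y; simp [hΩdef]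
    rw [h1]
    exact isOpen_iInter_of_finite fun j => isOpen_lt (continuous_apply j) continuous_const
  have hNc : ContinuousOn N Ω := hNsmooth.continuousOn
  set V : Set (ℝ × (Fin d → ℝ)) := {p | p.2 ∈ Ω ∧ p.1 * N p.2 < 1} with hVdef
  have hVo : IsOpen V := by
    have hc : ContinuousOn (fun p : ℝ × (Fin d → ℝ) => p.1 * N p.2) (Set.univ ×ˢ Ω) :=
      continuousOn_fst.mul (hNc.comp continuousOn_snd (fun p hp => hp.2))
    have h2 : IsOpen ((Set.univ ×ˢ Ω) ∩ (fun p : ℝ × (Fin d → ℝ) => p.1 * N p.2) ⁻¹' Set.Iio 1) :=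
      hc.isOpen_inter_preimage (isOpen_univ.prod hΩ) isOpen_Iio
    have h3 : V = (Set.univ ×ˢ Ω) ∩ (fun p : ℝ × (Fin d → ℝ) => p.1 * N p.2) ⁻¹' Set.Iio 1 := by
      ext p; simp [hVdef, and_comm]
    rw [h3]; exact h2
  set F : ℝ × (Fin d → ℝ) → ℝ := fun p => -(N p.2) * Lfun (p.1 * N p.2) with hFdef
  have hN2 : ContDiffOn ℝ (d : ℕ∞) (fun p : ℝ × (Fin d → ℝ) => N p.2) V :=
    hNsmooth.comp contDiff_snd.contDiffOn (fun p hp => hp.1)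
  have hmul : ContDiffOn ℝ (d : ℕ∞) (fun p : ℝ × (Fin d → ℝ) => p.1 * N p.2) V :=
    contDiff_fst.contDiffOn.mul hN2
  have hLon : ContDiffOn ℝ (d : ℕ∞) Lfun (Set.Iio 1) :=
    fun u hu => (Lfun_contDiffAt hu).contDiffWithinAt
  have hLcomp : ContDiffOn ℝ (d : ℕ∞) (fun p : ℝ × (Fin d → ℝ) => Lfun (p.1 * N p.2)) V :=
    hLon.comp hmul (fun p hp => hp.2)
  have hF : ContDiffOn ℝ (d : ℕ∞) F V := hN2.neg.mul hLcomp
  -- value of F at parameter 1/n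
  have hFval : ∀ n : ℕ, 1 ≤ n → ∀ y, F (1 / (n : ℝ), y) = (n : ℝ) * Real.log (1 - N y / n) := by
    intro n hn y
    have hn0 : (n : ℝ) ≠ 0 := Nat.cast_ne_zero.mpr (by omega)
    rcases eq_or_ne (N y) 0 with h | h
    · simp [hFdef, h]
    · have hu : (1 / (n : ℝ)) * N y ≠ 0 := by
        simp [hn0, h]
      rw [hFdef]
      simp only [Lfun, if_neg hu]
      have harg : 1 - 1 / (n : ℝ) * N y = 1 - N y / n := by ring
      rw [harg]
      field_simp
  -- main convergence lemma
  have main : ∀ (l : List (Fin d)), l.length ≤ d → ∀ x : Fin d → ℝ, (∀ j, x j < 0) →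
      ∀ (G : ℝ × (Fin d → ℝ) → ℝ), ContDiffOn ℝ (d : ℕ∞) G V →
      Tendsto (fun n : ℕ => mixedPartial l (fun y => G (1 / (n : ℝ), y)) x) atTop
        (nhds (mixedPartial l (fun y => G (0, y)) x)) := by
    intro l hl x hx G hG
    have hx0 : ((0 : ℝ), x) ∈ V := by
      refine ⟨hx, ?_⟩
      simp
    have hct : ContinuousAt
        (fun q : ℝ × (Fin d → ℝ) => mixedPartial l (fun y => G (q.1, y)) q.2) (0, x) :=
      (key hVo hG l hl (0, x) hx0).continuousAt
    have htend : Tendsto (fun n : ℕ => ((1 / (n : ℝ), x) : ℝ × (Fin d → ℝ))) atTop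
        (nhds ((0 : ℝ), x)) :=
      tendsto_one_div_atTop_nhds_zero_nat.prodMk_nhds tendsto_const_nhds
    exact hct.tendsto.comp htend
  have hF0 : (fun y => F (0, y)) = fun y => -N y := by
    funext y
    simp [hFdef, Lfun_zero]
  constructor
  · intro B hB x hx
    set l := B.sort (· ≤ ·) with hl
    have hlen : l.length ≤ d := by
      rw [hl, Finset.length_sort]
      have := Finset.card_le_univ B
      simpa using this
    have h1 := main l hlen x hx F hF
    rw [hF0] at h1
    refine h1.congr' ?_
    filter_upwards [eventually_ge_atTop 1] with n hn
    have hfe : (fun y => F (1 / (n : ℝ), y))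
        = fun y => -(n : ℝ) * Real.log (1 / (1 - N y / n)) := by
      funext y
      rw [hFval n hn y, one_div, Real.log_inv]
      ring
    rw [hfe]
  · intro x hx
    set l := List.finRange d with hl
    have hlen : l.length ≤ d := by simp [hl]
    have h1 := main l hlen x hx (fun p => Real.exp (F p)) (Real.contDiff_exp.comp_contDiffOn hF)
    have hF0' : (fun y => Real.exp (F (0, y))) = fun y => Real.exp (-N y) := by
      funext y
      rw [show F (0, y) = -N y from congrFun hF0 y]
    rw [hF0'] at h1
    refine h1.congr' ?_
    have hNx : ∀ᶠ n : ℕ in atTop, N x < (n : ℝ) :=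
      (tendsto_natCast_atTop_atTop (R := ℝ)).eventually_gt_atTop (N x)
    filter_upwards [eventually_ge_atTop 1, hNx] with n hn hNxn
    set U : Set (Fin d → ℝ) := Ω ∩ N ⁻¹' Set.Iio (n : ℝ) with hUdef
    have hUo : IsOpen U := hNc.isOpen_inter_preimage hΩ isOpen_Iio
    have hxU : x ∈ U := ⟨hx, hNxn⟩
    have heq : ∀ y ∈ U, Real.exp (F (1 / (n : ℝ), y)) = (1 - N y / n) ^ n := by
      intro y hy
      have hn0 : (0 : ℝ) < n := by
        have : (1 : ℕ) ≤ n := hn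
        exact_mod_cast Nat.pos_of_ne_zero (by omega)
      have hpos : 0 < 1 - N y / n := by
        rw [sub_pos, div_lt_one hn0]
        exact hy.2
      rw [hFval n hn y, Real.exp_nat_mul, Real.exp_log hpos]
    exact (mixedPartial_congr l hUo heq x hxU)
end

section
/- For the Gumbel–Hougaard copula C_p(u) = exp(−(Σ_{i=1}^d (−log uᵢ)^p)^{1/p}) with p ≥ 1, the expansion C_p(u) = 1 − ‖1 − u‖_p + o(‖1 − u‖) holds as u → 1 in [0,1]ᵈ, where ‖·‖_p is the logistic norm (Σ|xᵢ|^p)^{1/p}. -/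
open Filter

lemma gumbel_key {d : ℕ} (hd : d ≠ 0) (p : ℝ) (hp : 1 ≤ p) (u : Fin d → ℝ)
    (hu : u ∈ Set.Icc (0 : Fin d → ℝ) 1)
    (hm2 : ‖(1 : Fin d → ℝ) - u‖ ≤ 1/2)
    (hmd : ‖(1 : Fin d → ℝ) - u‖ ≤ 1/(4*d)) :
    |Real.exp (-(∑ i, (-Real.log (u i)) ^ p) ^ (1 / p)) - 1 +
        (∑ i, (1 - u i) ^ p) ^ (1 / p)| ≤
      (4*d^2 + 2*d) * ‖(1 : Fin d → ℝ) - u‖^2 := by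
  set m := ‖(1 : Fin d → ℝ) - u‖ with hmdef
  have hp0 : (0:ℝ) < p := lt_of_lt_of_le one_pos hp
  have hd1 : (1:ℝ) ≤ (d:ℝ) := by exact_mod_cast Nat.one_le_iff_ne_zero.2 hd
  have hm0 : 0 ≤ m := norm_nonneg _
  have hx0 : ∀ i, 0 ≤ 1 - u i := fun i => by
    have h := hu.2 i
    simp only [Pi.one_apply] at h
    linarith
  have hxm : ∀ i, 1 - u i ≤ m := fun i => by
    have h := norm_le_pi_norm ((1 : Fin d → ℝ) - u) i
    simpa [Real.norm_eq_abs, abs_of_nonneg (hx0 i)] using h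
  have hui : ∀ i, 1/2 ≤ u i := fun i => by have := hxm i; linarith
  have huipos : ∀ i, 0 < u i := fun i => lt_of_lt_of_le one_half_pos (hui i)
  -- log bounds
  have hlow : ∀ i, 1 - u i ≤ -Real.log (u i) := fun i => by
    have := Real.log_le_sub_one_of_pos (huipos i); linarith
  have hhigh : ∀ i, -Real.log (u i) ≤ (1 - u i) + 2*(1 - u i)^2 := fun i => by
    have h1 : Real.log (u i)⁻¹ ≤ (u i)⁻¹ - 1 :=
      Real.log_le_sub_one_of_pos (inv_pos.2 (huipos i))
    rw [Real.log_inv] at h1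
    have h2 : (u i)⁻¹ - 1 ≤ (1 - u i) + 2*(1 - u i)^2 := by
      rw [inv_eq_one_div, div_sub' (ne_of_gt (huipos i)), div_le_iff₀ (huipos i)]
      nlinarith [hui i, hu.2 i, sq_nonneg (1 - u i)]
    linarith
  set S := ∑ i, (-Real.log (u i)) ^ p with hS
  set T := ∑ i, (1 - u i) ^ p with hT
  have hT0 : 0 ≤ T := Finset.sum_nonneg fun i _ => Real.rpow_nonneg (hx0 i) p
  have hTS : T ≤ S := Finset.sum_le_sum fun i _ =>
    Real.rpow_le_rpow (hx0 i) (hlow i) hp0.le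
  have hTSroot : T ^ (1/p) ≤ S ^ (1/p) :=
    Real.rpow_le_rpow hT0 hTS (by positivity)
  -- Minkowski
  have hMink : S ^ (1/p) ≤ T ^ (1/p) + (∑ i, (-Real.log (u i) - (1 - u i)) ^ p) ^ (1/p) := by
    have h := Real.Lp_add_le Finset.univ (fun i => 1 - u i)
      (fun i => -Real.log (u i) - (1 - u i)) hp
    have e1 : ∀ i, |(1 - u i) + (-Real.log (u i) - (1 - u i))| ^ p = (-Real.log (u i)) ^ p := by
      intro i
      rw [show (1 - u i) + (-Real.log (u i) - (1 - u i)) = -Real.log (u i) by ring,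
        abs_of_nonneg (le_trans (hx0 i) (hlow i))]
    have e2 : ∀ i, |1 - u i| ^ p = (1 - u i) ^ p := fun i => by
      rw [abs_of_nonneg (hx0 i)]
    have e3 : ∀ i, |(-Real.log (u i) - (1 - u i))| ^ p = (-Real.log (u i) - (1 - u i)) ^ p :=
      fun i => by rw [abs_of_nonneg (by linarith [hlow i])]
    simp only [e1, e2, e3] at h
    exact h
  -- error term bound
  have hErr : (∑ i, (-Real.log (u i) - (1 - u i)) ^ p) ^ (1/p) ≤ 2*d*m^2 := by
    have hterm : ∀ i, (-Real.log (u i) - (1 - u i)) ^ p ≤ (2*m^2) ^ p := by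
      intro i
      apply Real.rpow_le_rpow (by linarith [hlow i]) _ hp0.le
      have h1 : (1 - u i)^2 ≤ m^2 := by
        apply sq_le_sq' <;> nlinarith [hx0 i, hxm i]
      linarith [hhigh i]
    have hsum : (∑ i, (-Real.log (u i) - (1 - u i)) ^ p) ≤ (d:ℝ) * (2*m^2) ^ p := by
      calc (∑ i, (-Real.log (u i) - (1 - u i)) ^ p) ≤ ∑ _i : Fin d, (2*m^2) ^ p :=
            Finset.sum_le_sum fun i _ => hterm i
        _ = (d:ℝ) * (2*m^2) ^ p := by simp [mul_comm]
    calc (∑ i, (-Real.log (u i) - (1 - u i)) ^ p) ^ (1/p)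
        ≤ ((d:ℝ) * (2*m^2) ^ p) ^ (1/p) := by
          apply Real.rpow_le_rpow (Finset.sum_nonneg fun i _ =>
            Real.rpow_nonneg (by linarith [hlow i]) p) hsum (by positivity)
      _ = (d:ℝ)^(1/p) * (2*m^2) := by
          rw [Real.mul_rpow (by positivity) (by positivity),
            ← Real.rpow_mul (by positivity : (0:ℝ) ≤ 2*m^2),
            mul_one_div_cancel (ne_of_gt hp0), Real.rpow_one]
      _ ≤ (d:ℝ) * (2*m^2) := by
          apply mul_le_mul_of_nonneg_right _ (by positivity)
          calc (d:ℝ)^(1/p) ≤ (d:ℝ)^(1:ℝ) :=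
                Real.rpow_le_rpow_of_exponent_le hd1 (by rw [div_le_one hp0]; linarith)
            _ = d := Real.rpow_one _
      _ = 2*d*m^2 := by ring
  -- T^{1/p} ≤ d m
  have hTroot : T ^ (1/p) ≤ (d:ℝ) * m := by
    have hsum : T ≤ (d:ℝ) * m ^ p := by
      calc T ≤ ∑ _i : Fin d, m ^ p :=
            Finset.sum_le_sum fun i _ => Real.rpow_le_rpow (hx0 i) (hxm i) hp0.le
        _ = (d:ℝ) * m ^ p := by simp [mul_comm]
    calc T ^ (1/p) ≤ ((d:ℝ) * m ^ p) ^ (1/p) :=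
          Real.rpow_le_rpow hT0 hsum (by positivity)
      _ = (d:ℝ)^(1/p) * m := by
          rw [Real.mul_rpow (by positivity) (Real.rpow_nonneg hm0 p),
            ← Real.rpow_mul hm0, mul_one_div_cancel (ne_of_gt hp0), Real.rpow_one]
      _ ≤ (d:ℝ) * m := by
          apply mul_le_mul_of_nonneg_right _ hm0
          calc (d:ℝ)^(1/p) ≤ (d:ℝ)^(1:ℝ) :=
                Real.rpow_le_rpow_of_exponent_le hd1 (by rw [div_le_one hp0]; linarith)
            _ = d := Real.rpow_one _
  set t := S ^ (1/p) with ht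
  have ht0 : 0 ≤ t := Real.rpow_nonneg (le_trans hT0 hTS) _
  have htle : t ≤ 2*(d:ℝ)*m := by
    have h1 : t ≤ T ^ (1/p) + 2*d*m^2 := le_trans hMink (by linarith)
    have h2 : 2*(d:ℝ)*m^2 ≤ (d:ℝ)*m := by nlinarith
    linarith
  have ht1 : t ≤ 1 := by
    have : 2*(d:ℝ)*m ≤ 2*(d:ℝ)*(1/(4*d)) :=
      mul_le_mul_of_nonneg_left hmd (by positivity)
    have hdne : (d:ℝ) ≠ 0 := by positivity
    have : 2*(d:ℝ)*(1/(4*(d:ℝ))) = 1/2 := by field_simp; ring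
    linarith [mul_le_mul_of_nonneg_left hmd (show (0:ℝ) ≤ 2*d by positivity)]
  have hexp : |Real.exp (-t) - 1 + t| ≤ 4*d^2*m^2 := by
    have h := Real.abs_exp_sub_one_sub_id_le (x := -t) (by rwa [abs_of_nonpos (by linarith), neg_neg])
    have : |Real.exp (-t) - 1 + t| ≤ (-t)^2 := by
      convert h using 2; ring
    calc |Real.exp (-t) - 1 + t| ≤ (-t)^2 := this
      _ = t^2 := by ring
      _ ≤ (2*d*m)^2 := by nlinarith
      _ = 4*d^2*m^2 := by ring
  have hdiff : |T ^ (1/p) - t| ≤ 2*d*m^2 := by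
    rw [abs_of_nonpos (by linarith)]
    have := le_trans hMink (by linarith : T ^ (1/p) + (∑ i, (-Real.log (u i) - (1 - u i)) ^ p) ^ (1/p) ≤ T ^ (1/p) + 2*d*m^2)
    linarith
  calc |Real.exp (-t) - 1 + T ^ (1/p)|
      = |(Real.exp (-t) - 1 + t) + (T ^ (1/p) - t)| := by ring_nf
    _ ≤ |Real.exp (-t) - 1 + t| + |T ^ (1/p) - t| := abs_add_le _ _
    _ ≤ 4*d^2*m^2 + 2*d*m^2 := add_le_add hexp hdiff
    _ = (4*d^2 + 2*d) * m^2 := by ring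

/-- for the Gumbel–Hougaard copula
`C_p(u) = exp(−(∑ (−log uᵢ)^p)^{1/p})`, `p ≥ 1`, one has
`C_p(u) = 1 − ‖1 − u‖_p + o(‖1 − u‖)` as `u → 1` in `[0,1]ᵈ`, i.e. the normalised
remainder tends to `0`. -/
theorem stmt_15 {d : ℕ} (hd : d ≠ 0) (p : ℝ) (hp : 1 ≤ p) :
    Tendsto
      (fun u : Fin d → ℝ =>
        (Real.exp (-(∑ i, (-Real.log (u i)) ^ p) ^ (1 / p)) - 1 +
            (∑ i, (1 - u i) ^ p) ^ (1 / p)) / ‖(1 : Fin d → ℝ) - u‖)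
      (nhdsWithin 1 (Set.Icc (0 : Fin d → ℝ) 1 \ {1}))
      (nhds 0) := by
  have hnorm : Tendsto (fun u : Fin d → ℝ => ‖(1 : Fin d → ℝ) - u‖)
      (nhdsWithin 1 (Set.Icc (0 : Fin d → ℝ) 1 \ {1})) (nhds 0) := by
    have : Tendsto (fun u : Fin d → ℝ => ‖(1 : Fin d → ℝ) - u‖) (nhds 1) (nhds 0) := by
      have hc : Continuous (fun u : Fin d → ℝ => ‖(1 : Fin d → ℝ) - u‖) :=
        (continuous_const.sub continuous_id).norm
      simpa using hc.tendsto 1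
    exact this.mono_left nhdsWithin_le_nhds
  have hKnorm : Tendsto (fun u : Fin d → ℝ => (4*(d:ℝ)^2 + 2*d) * ‖(1 : Fin d → ℝ) - u‖)
      (nhdsWithin 1 (Set.Icc (0 : Fin d → ℝ) 1 \ {1})) (nhds 0) := by
    simpa using hnorm.const_mul (4*(d:ℝ)^2 + 2*d)
  apply squeeze_zero_norm' _ hKnorm
  have hδ : (0:ℝ) < min (1/2 : ℝ) (1/(4*(d:ℝ))) := by
    have : (0:ℝ) < (d:ℝ) := by exact_mod_cast Nat.pos_of_ne_zero hd
    positivity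
  have hsmall : ∀ᶠ u in nhdsWithin 1 (Set.Icc (0 : Fin d → ℝ) 1 \ {1}),
      ‖(1 : Fin d → ℝ) - u‖ < min (1/2 : ℝ) (1/(4*(d:ℝ))) :=
    hnorm.eventually (gt_mem_nhds hδ)
  filter_upwards [hsmall, self_mem_nhdsWithin] with u hus humem
  obtain ⟨huIcc, hune⟩ := humem
  have hune1 : u ≠ 1 := fun h => hune (by simp [h])
  have hmpos : 0 < ‖(1 : Fin d → ℝ) - u‖ := by
    rw [norm_pos_iff]
    intro h
    apply hune1
    have := sub_eq_zero.mp h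
    exact this.symm
  have hkey := gumbel_key hd p hp u huIcc (le_of_lt (lt_of_lt_of_le hus (min_le_left _ _)))
    (le_of_lt (lt_of_lt_of_le hus (min_le_right _ _)))
  rw [norm_div, Real.norm_eq_abs, Real.norm_eq_abs, abs_of_pos hmpos,
    div_le_iff₀ hmpos]
  calc |Real.exp (-(∑ i, (-Real.log (u i)) ^ p) ^ (1 / p)) - 1 +
        (∑ i, (1 - u i) ^ p) ^ (1 / p)| ≤ (4*d^2 + 2*d) * ‖(1 : Fin d → ℝ) - u‖^2 := hkey
    _ = (4*(d:ℝ)^2 + 2*d) * ‖(1 : Fin d → ℝ) - u‖ * ‖(1 : Fin d → ℝ) - u‖ := by ring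
end
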